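/- arXiv:0903.4341 — 4 statements merged into one kernel-verified Lean document; each statement's English description precedes it below -/
import Mathlib

section
/- If every finitely presented group satisfies the classical Bass conjecture, then every group satisfies the classical Bass conjecture. -/
open scoped Classical

/-- The partial augmentation `ε_s`: the sum of the coefficients of `x : ℤG` over the
conjugacy class of `s`. -/
noncomputable def partialAug {G : Type*} [Group G] (x : MonoidAlgebra ℤ G) (s : G) : ℤ :=
  ∑ g ∈ x.coeff.support.filter (fun g => IsConj s g), x.coeff g

/-- `G` satisfies the classical Bass conjecture. -/
def SatisfiesBassConjecture (G : Type*) [Group G] : Prop :=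
  ∀ (k : ℕ), 1 ≤ k → ∀ A : Matrix (Fin k) (Fin k) (MonoidAlgebra ℤ G),
    A * A = A → ∀ s : G, s ≠ 1 → partialAug A.trace s = 0

/-- `G` is finitely presented. -/
def IsFinitelyPresented (G : Type*) [Group G] : Prop :=
  ∃ (n : ℕ) (R : Set (FreeGroup (Fin n))), R.Finite ∧
    Nonempty (G ≃* FreeGroup (Fin n) ⧸ Subgroup.normalClosure R)

lemma partialAug_mapDomain {G H : Type*} [Group G] [Group H] (ψ : H →* G)
    (x : MonoidAlgebra ℤ H) (s : G) :
    partialAug (MonoidAlgebra.ofCoeff (Finsupp.mapDomain ψ x.coeff)) s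
      = ∑ t ∈ x.coeff.support.filter (fun t => IsConj s (ψ t)), x.coeff t := by
  unfold partialAug
  rw [Finset.sum_filter, Finset.sum_filter]
  exact Finsupp.sum_mapDomain_index (h := fun g c => if IsConj s g then c else 0)
    (by simp) (by intro b m₁ m₂; split <;> simp)

lemma mapDomain_apply_eq_sum_filter {α β M : Type*} [AddCommMonoid M] (f : α → β)
    (x : α →₀ M) (b : β) :
    Finsupp.mapDomain f x b = ∑ a ∈ x.support.filter (fun a => f a = b), x a := by
  rw [Finsupp.mapDomain, Finsupp.sum_apply, Finsupp.sum, Finset.sum_filter]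
  exact Finset.sum_congr rfl fun a _ => by rw [Finsupp.single_apply]

lemma sum_conjClosed_eq_zero {H : Type*} [Group H] (x : MonoidAlgebra ℤ H)
    (T : Finset H) (hsub : T ⊆ x.coeff.support)
    (hclosed : ∀ t ∈ T, ∀ u ∈ x.coeff.support, IsConj t u → u ∈ T)
    (h0 : ∀ t ∈ T, partialAug x t = 0) : ∑ t ∈ T, x.coeff t = 0 := by
  induction T using Finset.strongInduction with
  | _ T ih =>
    rcases T.eq_empty_or_nonempty with rfl | ⟨t, ht⟩
    · simp
    · set C := x.coeff.support.filter (fun u => IsConj t u) with hC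
      have hCT : C ⊆ T := fun u hu => by
        rw [hC, Finset.mem_filter] at hu
        exact hclosed t ht u hu.1 hu.2
      have htC : t ∈ C := by
        rw [hC, Finset.mem_filter]
        exact ⟨hsub ht, IsConj.refl t⟩
      have hsplit : T = C ∪ (T \ C) := (Finset.union_sdiff_of_subset hCT).symm
      have hCsum : ∑ u ∈ C, x.coeff u = 0 := h0 t ht
      have hss : T \ C ⊂ T := Finset.sdiff_ssubset hCT ⟨t, htC⟩
      have hrest : ∑ u ∈ T \ C, x.coeff u = 0 := by
        refine ih (T \ C) hss (fun u hu => hsub (Finset.mem_sdiff.mp hu).1) ?_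
          (fun u hu => h0 u (Finset.mem_sdiff.mp hu).1)
        intro u hu v hv huv
        obtain ⟨huT, huC⟩ := Finset.mem_sdiff.mp hu
        refine Finset.mem_sdiff.mpr ⟨hclosed u huT v hv huv, fun hvC => huC ?_⟩
        rw [hC, Finset.mem_filter] at hvC ⊢
        exact ⟨hsub huT, hvC.2.trans huv.symm⟩
      rw [hsplit, Finset.sum_union Finset.sdiff_disjoint.symm, hCsum, hrest, add_zero]

lemma mapDomain_eq_zero_of_compat {α β γ : Type*} (p : α → β) (q : α → γ) (x : α →₀ ℤ)
    (hcompat : ∀ u ∈ x.support, ∀ v ∈ x.support, (p u = p v ↔ q u = q v))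
    (hq : Finsupp.mapDomain q x = 0) : Finsupp.mapDomain p x = 0 := by
  ext b
  rw [Finsupp.coe_zero, Pi.zero_apply, mapDomain_apply_eq_sum_filter]
  rcases (x.support.filter (fun a => p a = b)).eq_empty_or_nonempty with he | ⟨u₀, hu₀⟩
  · rw [he, Finset.sum_empty]
  · obtain ⟨hu₀s, hu₀b⟩ := Finset.mem_filter.mp hu₀
    have hfil : x.support.filter (fun a => p a = b)
        = x.support.filter (fun a => q a = q u₀) := by
      apply Finset.filter_congr
      intro u hu
      rw [← hu₀b]
      exact hcompat u hu u₀ hu₀s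
    rw [hfil, ← mapDomain_apply_eq_sum_filter, hq, Finsupp.coe_zero, Pi.zero_apply]

lemma exists_fp_lift {G : Type*} [Group G] (k : ℕ)
    (A : Matrix (Fin k) (Fin k) (MonoidAlgebra ℤ G)) (hA : A * A = A) :
    ∃ (H : Type) (_ : Group H) (ψ : H →* G) (B : Matrix (Fin k) (Fin k) (MonoidAlgebra ℤ H)),
      IsFinitelyPresented H ∧ B * B = B ∧
      ∀ i j, MonoidAlgebra.ofCoeff (Finsupp.mapDomain ψ (B i j).coeff) = A i j := by
  -- the finite set of group elements occurring in A
  set S : Finset G := Finset.univ.biUnion (fun p : Fin k × Fin k => (A p.1 p.2).coeff.support) with hS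
  set n : ℕ := S.card with hn
  set F := FreeGroup (Fin n) with hF
  -- the free group on S and the evaluation map
  set φ : F →* G := FreeGroup.lift (fun i => ((S.equivFin.symm i : S) : G)) with hφ
  -- lift of A to the free group
  have memS : ∀ (i j : Fin k) (g : G), g ∈ (A i j).coeff.support → g ∈ S := fun i j g hg =>
    Finset.mem_biUnion.mpr ⟨(i, j), Finset.mem_univ _, hg⟩
  set Atil : Matrix (Fin k) (Fin k) (MonoidAlgebra ℤ F) := fun i j =>
    ∑ g ∈ (A i j).coeff.support.attach,
      MonoidAlgebra.single (FreeGroup.of (S.equivFin ⟨g.1, memS i j g.1 g.2⟩)) ((A i j).coeff g.1)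
    with hAtil
  set Φ : MonoidAlgebra ℤ F →+* MonoidAlgebra ℤ G := MonoidAlgebra.mapDomainRingHom ℤ φ with hΦ
  have hΦapp : ∀ x : MonoidAlgebra ℤ F, Φ x = MonoidAlgebra.ofCoeff (Finsupp.mapDomain φ x.coeff) :=
    fun x => rfl
  have hpushA : ∀ i j, Φ (Atil i j) = A i j := by
    intro i j
    rw [hAtil, map_sum]
    have : ∀ g ∈ (A i j).coeff.support.attach,
        Φ (MonoidAlgebra.single (FreeGroup.of (S.equivFin ⟨g.1, memS i j g.1 g.2⟩)) ((A i j).coeff g.1))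
          = MonoidAlgebra.single g.1 ((A i j).coeff g.1) := by
      intro g _
      rw [hΦapp, MonoidAlgebra.coeff_single, Finsupp.mapDomain_single, MonoidAlgebra.ofCoeff_single]
      congr 1
      show φ (FreeGroup.of _) = _
      rw [hφ, FreeGroup.lift_apply_of, Equiv.symm_apply_apply]
    rw [Finset.sum_congr rfl this, Finset.sum_attach _ (fun g => MonoidAlgebra.single g ((A i j).coeff g))]
    apply MonoidAlgebra.coeff_injective
    rw [MonoidAlgebra.coeff_sum]
    simp only [MonoidAlgebra.coeff_single]
    rw [← Finsupp.sum, Finsupp.sum_single]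
  -- the error matrix and relations
  set E : Matrix (Fin k) (Fin k) (MonoidAlgebra ℤ F) := Atil * Atil - Atil with hE
  have hEφ : ∀ i j, Φ (E i j) = 0 := by
    intro i j
    rw [hE, Matrix.sub_apply, map_sub, Matrix.mul_apply, map_sum]
    have : ∀ l ∈ Finset.univ, Φ (Atil i l * Atil l j) = A i l * A l j := by
      intro l _; rw [map_mul, hpushA, hpushA]
    rw [Finset.sum_congr rfl this, hpushA, ← Matrix.mul_apply, hA, sub_self]
  set Supp : Finset F := Finset.univ.biUnion (fun p : Fin k × Fin k => (E p.1 p.2).coeff.support)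
    with hSupp
  set R : Set F := (fun p : F × F => p.1⁻¹ * p.2) ''
    {p : F × F | p.1 ∈ Supp ∧ p.2 ∈ Supp ∧ φ p.1 = φ p.2} with hR
  have hRfin : R.Finite := by
    apply Set.Finite.image
    apply Set.Finite.subset ((Supp ×ˢ Supp).finite_toSet)
    intro p hp
    exact Finset.mem_coe.mpr (Finset.mem_product.mpr ⟨hp.1, hp.2.1⟩)
  set N := Subgroup.normalClosure R with hN
  have hNker : N ≤ φ.ker := by
    apply Subgroup.normalClosure_le_normal
    rintro w ⟨⟨u, v⟩, ⟨_, _, huv⟩, rfl⟩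
    simp only [SetLike.mem_coe, MonoidHom.mem_ker, map_mul, map_inv φ, huv]
    exact inv_mul_cancel _
  refine ⟨F ⧸ N, inferInstance, QuotientGroup.lift N φ (fun w hw => hNker hw), ?_⟩
  set π : F →* F ⧸ N := QuotientGroup.mk' N with hπ
  set Pm : MonoidAlgebra ℤ F →+* MonoidAlgebra ℤ (F ⧸ N) := MonoidAlgebra.mapDomainRingHom ℤ π
    with hPm
  refine ⟨Pm.mapMatrix Atil, ⟨n, R, hRfin, ⟨MulEquiv.refl _⟩⟩, ?_, ?_⟩
  · -- idempotence
    have hEπ : ∀ i j, Pm (E i j) = 0 := by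
      intro i j
      have hsupp : ∀ u ∈ (E i j).coeff.support, u ∈ Supp := fun u hu =>
        Finset.mem_biUnion.mpr ⟨(i, j), Finset.mem_univ _, hu⟩
      have happ : ∀ x : MonoidAlgebra ℤ F, Pm x = MonoidAlgebra.ofCoeff (Finsupp.mapDomain π x.coeff) :=
        fun _ => rfl
      rw [happ, MonoidAlgebra.ofCoeff_eq_zero]
      apply mapDomain_eq_zero_of_compat (⇑π) (⇑φ) (E i j).coeff
      · intro u hu v hv
        constructor
        · intro hπuv
          have hmem : u⁻¹ * v ∈ N := by
            obtain ⟨z, hz, hz'⟩ := (QuotientGroup.mk'_eq_mk' (N := N)).mp hπuv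
            rwa [← hz', inv_mul_cancel_left]
          have h1 : φ (u⁻¹ * v) = 1 := hNker hmem
          rw [map_mul, map_inv φ] at h1
          exact inv_mul_eq_one.mp h1
        · intro hφuv
          have hmem : u⁻¹ * v ∈ N := by
            apply Subgroup.subset_normalClosure
            exact ⟨(u, v), ⟨hsupp u hu, hsupp v hv, hφuv⟩, rfl⟩
          exact (QuotientGroup.mk'_eq_mk' (N := N)).mpr ⟨u⁻¹ * v, hmem, mul_inv_cancel_left u v⟩
      · rw [← MonoidAlgebra.ofCoeff_eq_zero, ← hΦapp]
        exact hEφ i j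
    have : Pm.mapMatrix Atil * Pm.mapMatrix Atil - Pm.mapMatrix Atil = Pm.mapMatrix E := by
      rw [hE, map_sub, map_mul]
    have h0 : Pm.mapMatrix E = 0 := by
      ext i j
      rw [RingHom.mapMatrix_apply, Matrix.map_apply, hEπ, Matrix.zero_apply]
    have := this.trans h0
    rwa [sub_eq_zero] at this
  · -- pushforward
    intro i j
    have happ : (Pm.mapMatrix Atil) i j = MonoidAlgebra.ofCoeff (Finsupp.mapDomain π (Atil i j).coeff) := rfl
    rw [happ, MonoidAlgebra.coeff_ofCoeff, ← Finsupp.mapDomain_comp]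
    have hcomp : (QuotientGroup.lift N φ (fun w hw => hNker hw)) ∘ π = φ := by
      funext w; rfl
    rw [hcomp, ← hΦapp, hpushA]

/-- If every finitely presented group satisfies the classical Bass conjecture, then every
group satisfies the classical Bass conjecture. -/
theorem satisfiesBassConjecture_of_finitelyPresented
    (h : ∀ (H : Type) [Group H], IsFinitelyPresented H → SatisfiesBassConjecture H) :
    ∀ (G : Type*) [Group G], SatisfiesBassConjecture G := by
  intro G _ k hk A hA s hs
  obtain ⟨H, _, ψ, B, hfp, hB, hpush⟩ := exists_fp_lift k A hA
  have hH := h H hfp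
  have htr : MonoidAlgebra.ofCoeff (Finsupp.mapDomain ψ B.trace.coeff) = A.trace := by
    unfold Matrix.trace Matrix.diag
    have hms : Finsupp.mapDomain (⇑ψ) (∑ i, (B i i).coeff) = ∑ i, Finsupp.mapDomain (⇑ψ) (B i i).coeff :=
      map_sum (Finsupp.mapDomain.addMonoidHom (⇑ψ)) _ _
    rw [MonoidAlgebra.coeff_sum, hms, MonoidAlgebra.ofCoeff_sum]
    exact Finset.sum_congr rfl fun i _ => hpush i i
  rw [← htr, partialAug_mapDomain]
  apply sum_conjClosed_eq_zero _ _ (Finset.filter_subset _ _)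
  · intro t ht u hu htu
    rw [Finset.mem_filter] at ht ⊢
    exact ⟨hu, ht.2.trans (ψ.map_isConj htu)⟩
  · intro t ht
    rw [Finset.mem_filter] at ht
    have ht1 : t ≠ 1 := by
      rintro rfl
      rw [map_one] at ht
      exact hs (by simpa using ht.2)
    exact hH k hk B hB t ht1
end

section
/- If every finitely presented group satisfies the weak Bass conjecture, then every group satisfies the weak Bass conjecture. -/
/-- `G` satisfies the weak Bass conjecture: for every `k ≥ 1` and every idempotent `k × k`
matrix `A` over `ℤG`, the Kaplansky trace of `A` (the coefficient of the identity in the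
trace of `A`) equals the augmentation of the trace of `A` (the sum of all coefficients). -/
def SatisfiesWeakBassConjecture (G : Type*) [Group G] : Prop :=
  ∀ (k : ℕ), 1 ≤ k → ∀ A : Matrix (Fin k) (Fin k) (MonoidAlgebra ℤ G),
    A * A = A → A.trace.coeff 1 = ∑ g ∈ A.trace.coeff.support, A.trace.coeff g

open Finsupp in
/-- If `x` maps to zero under `mapDomain f` and `g` identifies elements of the support
whenever `f` does, then `x` maps to zero under `mapDomain g`. -/
lemma bass_aux_mapDomain_zero {α β γ : Type*} [Nonempty γ] (f : α → β) (g : α → γ)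
    (x : α →₀ ℤ) (hx : Finsupp.mapDomain f x = 0)
    (hfg : ∀ u ∈ x.support, ∀ v ∈ x.support, f u = f v → g u = g v) :
    Finsupp.mapDomain g x = 0 := by
  classical
  set s : β → γ := fun b => if h : ∃ u ∈ x.support, f u = b then g h.choose
    else Classical.arbitrary γ with hs
  have key : ∀ u ∈ x.support, g u = (s ∘ f) u := by
    intro u hu
    have hex : ∃ v ∈ x.support, f v = f u := ⟨u, hu, rfl⟩
    simp only [hs, Function.comp_apply, dif_pos hex]
    exact (hfg _ hex.choose_spec.1 _ hu hex.choose_spec.2).symm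
  rw [Finsupp.mapDomain_congr key, Finsupp.mapDomain_comp, hx, Finsupp.mapDomain_zero]

/-- Evaluating a `mapDomain` at a point whose fiber in the support is at most `{a0}`. -/
lemma bass_aux_mapDomain_apply {α β : Type*} [DecidableEq β] (f : α → β) (a0 : α) (b0 : β)
    (hf : f a0 = b0) (y : α →₀ ℤ) (hfib : ∀ u ∈ y.support, f u = b0 → u = a0) :
    (Finsupp.mapDomain f y) b0 = y a0 := by
  classical
  rw [Finsupp.mapDomain, Finsupp.sum_apply]
  rw [Finsupp.sum]
  have : ∀ u ∈ y.support, (Finsupp.single (f u) (y u)) b0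
      = if u = a0 then y u else 0 := by
    intro u hu
    rw [Finsupp.single_apply]
    congr 1
    simp only [eq_iff_iff]
    constructor
    · exact fun h => hfib u hu h
    · rintro rfl; exact hf
  rw [Finset.sum_congr rfl this, Finset.sum_ite_eq' y.support a0 y]
  split
  · rfl
  · next h => exact (Finsupp.notMem_support_iff.mp h).symm

/-- augmentation is preserved by mapDomain -/
lemma bass_aux_eps {α β : Type*} (f : α → β) (y : α →₀ ℤ) :
    ∑ b ∈ (Finsupp.mapDomain f y).support, (Finsupp.mapDomain f y) b
      = ∑ a ∈ y.support, y a := by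
  classical
  have h1 : ∑ b ∈ (Finsupp.mapDomain f y).support, (Finsupp.mapDomain f y) b
      = (Finsupp.mapDomain f y).sum fun _ m => m := rfl
  have h2 : ∑ a ∈ y.support, y a = y.sum fun _ m => m := rfl
  rw [h1, h2]
  exact Finsupp.sum_mapDomain_index (fun _ => rfl) (fun _ _ _ => rfl)

/-- Trace commutes with entrywise ring hom. -/
lemma bass_aux_trace {α β : Type*} [NonAssocSemiring α] [NonAssocSemiring β]
    {m : ℕ} (f : α →+* β) (M : Matrix (Fin m) (Fin m) α) :
    (f.mapMatrix M).trace = f M.trace := by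
  simp [Matrix.trace, Matrix.diag, RingHom.mapMatrix_apply, Matrix.map_apply, map_sum]

/-- If every finitely presented group satisfies the weak Bass conjecture, then every group
satisfies the weak Bass conjecture. -/
theorem satisfiesWeakBassConjecture_of_finitelyPresented
    (h : ∀ (H : Type) [Group H], IsFinitelyPresented H → SatisfiesWeakBassConjecture H) :
    ∀ (G : Type*) [Group G], SatisfiesWeakBassConjecture G := by
  classical
  intro G _ k hk A hA
  -- the finite set of group elements appearing in `A`
  set S : Finset G := Finset.univ.biUnion
    (fun p : Fin k × Fin k => (A p.1 p.2).coeff.support) with hSdef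
  have hmemS : ∀ i j : Fin k, (A i j).coeff.support ⊆ S := by
    intro i j x hx
    exact Finset.mem_biUnion.2 ⟨(i, j), Finset.mem_univ _, hx⟩
  set n : ℕ := S.card with hn
  set e : {x // x ∈ S} ≃ Fin n := S.equivFin with he
  set σ : Fin n → G := fun i => ((e.symm i : {x // x ∈ S}) : G) with hσ
  set π : FreeGroup (Fin n) →* G := FreeGroup.lift σ with hπ
  set τ : G → FreeGroup (Fin n) :=
    fun g => if hg : g ∈ S then FreeGroup.of (e ⟨g, hg⟩) else 1 with hτ
  have hπτ : ∀ g ∈ S, π (τ g) = g := by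
    intro g hg
    simp only [hτ, dif_pos hg, hπ, FreeGroup.lift_apply_of, hσ, he]
    rw [Equiv.symm_apply_apply]
  -- lift `A` to a matrix over the free group
  set B : Matrix (Fin k) (Fin k) (MonoidAlgebra ℤ (FreeGroup (Fin n))) :=
    A.map (fun a => MonoidAlgebra.mapDomain τ a) with hB
  set Φπ := MonoidAlgebra.mapDomainRingHom (M := FreeGroup (Fin n)) ℤ π with hΦπ
  have hΦπfun : ∀ a, Φπ a = MonoidAlgebra.ofCoeff (Finsupp.mapDomain π a.coeff) := fun a => rfl
  have hπB : Φπ.mapMatrix B = A := by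
    apply Matrix.ext
    intro i j
    rw [RingHom.mapMatrix_apply, Matrix.map_apply, hΦπfun]
    show MonoidAlgebra.ofCoeff (Finsupp.mapDomain (⇑π) (Finsupp.mapDomain τ (A i j).coeff)) = A i j
    rw [← Finsupp.mapDomain_comp]
    rw [Finsupp.mapDomain_congr (g := id), Finsupp.mapDomain_id]
    intro x hx
    exact hπτ x (hmemS i j hx)
  -- the error matrix
  set X : Matrix (Fin k) (Fin k) (MonoidAlgebra ℤ (FreeGroup (Fin n))) :=
    B * B - B with hX
  have hXπ : ∀ i j, Finsupp.mapDomain π (X i j).coeff = 0 := by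
    intro i j
    have h0 : Φπ.mapMatrix X = 0 := by
      rw [hX, map_sub, map_mul, hπB, hA, sub_self]
    have h1 : Φπ.mapMatrix X i j = (0 : Matrix (Fin k) (Fin k) (MonoidAlgebra ℤ G)) i j := by
      rw [h0]
    rw [RingHom.mapMatrix_apply, Matrix.map_apply, hΦπfun, Matrix.zero_apply] at h1
    exact MonoidAlgebra.ofCoeff_eq_zero.mp h1
  -- the finite set of relations
  set R : Finset (FreeGroup (Fin n)) :=
    ((Finset.univ : Finset (Fin k × Fin k)).biUnion (fun p =>
      (((X p.1 p.2).coeff.support ×ˢ (X p.1 p.2).coeff.support).filter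
        (fun uv => π uv.1 = π uv.2)).image (fun uv => uv.1⁻¹ * uv.2)))
    ∪ (B.trace.coeff.support.filter (fun u => π u = 1)) with hR
  have hRker : (R : Set (FreeGroup (Fin n))) ⊆ (π.ker : Set (FreeGroup (Fin n))) := by
    intro x hx
    simp only [Finset.coe_union, Set.mem_union, Finset.mem_coe, Finset.mem_biUnion,
      Finset.mem_image, Finset.mem_filter, Finset.mem_product, hR] at hx
    rcases hx with ⟨p, -, ⟨⟨u, v⟩, ⟨⟨-, -⟩, huv⟩, rfl⟩⟩ | ⟨-, hx⟩
    · simp only [SetLike.mem_coe, MonoidHom.mem_ker, map_mul, map_inv, huv,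
        inv_mul_cancel]
    · simpa [MonoidHom.mem_ker] using hx
  set N : Subgroup (FreeGroup (Fin n)) :=
    Subgroup.normalClosure (R : Set (FreeGroup (Fin n))) with hN
  have hNker : N ≤ π.ker := Subgroup.normalClosure_le_normal hRker
  set q : FreeGroup (Fin n) →* (FreeGroup (Fin n) ⧸ N) := QuotientGroup.mk' N with hq
  set ψ : (FreeGroup (Fin n) ⧸ N) →* G := QuotientGroup.lift N π hNker with hψ
  have hψq : ∀ u, ψ (q u) = π u := fun u => rfl
  set Φq := MonoidAlgebra.mapDomainRingHom (M := FreeGroup (Fin n)) ℤ q with hΦq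
  set C : Matrix (Fin k) (Fin k) (MonoidAlgebra ℤ (FreeGroup (Fin n) ⧸ N)) :=
    Φq.mapMatrix B with hC
  -- C is idempotent
  have hΦqfun : ∀ a, Φq a = MonoidAlgebra.ofCoeff (Finsupp.mapDomain q a.coeff) := fun a => rfl
  have hCX : Φq.mapMatrix X = 0 := by
    apply Matrix.ext
    intro i j
    rw [RingHom.mapMatrix_apply, Matrix.map_apply, hΦqfun, Matrix.zero_apply]
    refine MonoidAlgebra.ofCoeff_eq_zero.mpr (bass_aux_mapDomain_zero π q (X i j).coeff (hXπ i j) ?_)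
    intro u hu v hv huv
    simp only [hq, QuotientGroup.mk'_apply]
    rw [QuotientGroup.eq]
    apply Subgroup.subset_normalClosure
    rw [Finset.mem_coe]
    apply Finset.mem_union_left
    refine Finset.mem_biUnion.2 ⟨(i, j), Finset.mem_univ _, ?_⟩
    exact Finset.mem_image.2 ⟨(u, v), Finset.mem_filter.2
      ⟨Finset.mem_product.2 ⟨hu, hv⟩, huv⟩, rfl⟩
  have hCC : C * C = C := by
    have := hCX
    rw [hX, map_sub, map_mul, ← hC, sub_eq_zero] at this
    exact this
  -- the quotient group is finitely presented
  have hfp : IsFinitelyPresented (FreeGroup (Fin n) ⧸ N) :=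
    ⟨n, (R : Set (FreeGroup (Fin n))), R.finite_toSet, ⟨MulEquiv.refl _⟩⟩
  have hBass := h (FreeGroup (Fin n) ⧸ N) hfp k hk C hCC
  -- traces
  have htrC : C.trace.coeff = Finsupp.mapDomain q B.trace.coeff := by
    rw [hC, bass_aux_trace, hΦqfun]
  have htrA : A.trace.coeff = Finsupp.mapDomain π B.trace.coeff := by
    rw [← hπB, bass_aux_trace, hΦπfun]
  have hπψq : (Finsupp.mapDomain π B.trace.coeff : G →₀ ℤ)
      = Finsupp.mapDomain ψ (Finsupp.mapDomain q B.trace.coeff) := by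
    rw [← Finsupp.mapDomain_comp]
    exact Finsupp.mapDomain_congr (fun x _ => (hψq x).symm)
  have htrAψ : A.trace.coeff = Finsupp.mapDomain ψ C.trace.coeff := by
    rw [htrA, htrC, hπψq]
  -- kappa comparison
  have hfib : ∀ u ∈ C.trace.coeff.support, ψ u = 1 → u = 1 := by
    intro u hu hu1
    rw [htrC] at hu
    have := Finsupp.mapDomain_support hu
    rcases Finset.mem_image.1 this with ⟨v, hv, rfl⟩
    have hπv : π v = 1 := hu1
    have hvN : v ∈ N := by
      apply Subgroup.subset_normalClosure
      rw [Finset.mem_coe]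
      exact Finset.mem_union_right _ (Finset.mem_filter.2 ⟨hv, hπv⟩)
    simpa only [hq, QuotientGroup.mk'_apply] using (QuotientGroup.eq_one_iff v).2 hvN
  have hkappa : A.trace.coeff 1 = C.trace.coeff 1 := by
    rw [htrAψ]
    exact bass_aux_mapDomain_apply ψ 1 1 (map_one ψ) C.trace.coeff hfib
  -- epsilon comparison
  have heps : ∑ g ∈ A.trace.coeff.support, A.trace.coeff g = ∑ u ∈ C.trace.coeff.support, C.trace.coeff u := by
    rw [htrAψ]
    exact bass_aux_eps ψ C.trace.coeff
  rw [hkappa, heps, hBass]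
end

section
/- Let G be a group, k ≥ 1, and A an idempotent k×k matrix over the integral group ring ℤG. Then there exist a finitely presented group H, a group homomorphism φ : H → G, and an idempotent k×k matrix B over ℤH such that applying entrywise the ring homomorphism ℤH → ℤG induced by φ (i.e. MonoidAlgebra.mapDomain φ) to B yields A. -/
private lemma mapDomain_eq_zero_of_factors {α β γ : Type*} [Nonempty γ] (v : α →₀ ℤ)
    (g : α → β) (f : α → γ)
    (hfg : ∀ x ∈ v.support, ∀ y ∈ v.support, g x = g y → f x = f y)
    (hg : Finsupp.mapDomain g v = 0) : Finsupp.mapDomain f v = 0 := by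
  classical
  set f' : β → γ := fun c =>
    if h : ∃ x ∈ v.support, g x = c then f h.choose else Classical.arbitrary γ with hf'
  have h1 : Finsupp.mapDomain f v = Finsupp.mapDomain (f' ∘ g) v := by
    refine Finsupp.mapDomain_congr fun x hx => ?_
    have hex : ∃ y ∈ v.support, g y = g x := ⟨x, hx, rfl⟩
    simp only [Function.comp_apply, hf', dif_pos hex]
    exact hfg x hx _ hex.choose_spec.1 hex.choose_spec.2.symm
  rw [h1, Finsupp.mapDomain_comp, hg, Finsupp.mapDomain_zero]

/-- Every idempotent matrix over `ℤG` is the entrywise image of an idempotent matrix over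
`ℤH` for some finitely presented group `H` mapping to `G`. -/
theorem exists_finitelyPresented_lift_of_idempotent
    (G : Type*) [Group G] (k : ℕ) (hk : 1 ≤ k)
    (A : Matrix (Fin k) (Fin k) (MonoidAlgebra ℤ G)) (hA : A * A = A) :
    ∃ (H : Type) (_ : Group H), IsFinitelyPresented H ∧
      ∃ (φ : H →* G) (B : Matrix (Fin k) (Fin k) (MonoidAlgebra ℤ H)),
        B * B = B ∧ B.map (MonoidAlgebra.mapDomainRingHom ℤ φ) = A := by
  classical
  -- the finite set of group elements appearing in `A`
  set S : Finset G := Finset.univ.sup (fun p : Fin k × Fin k => (A p.1 p.2).coeff.support) with hS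
  set n : ℕ := S.card with hn
  set e : {x // x ∈ S} ≃ Fin n := S.equivFin with he
  set F : Type := FreeGroup (Fin n) with hF
  -- the projection and the (set-theoretic) section
  set π : F →* G := FreeGroup.lift (fun i => ((e.symm i : S) : G)) with hπ
  set ι : G → F := fun x => if h : x ∈ S then FreeGroup.of (e ⟨x, h⟩) else 1 with hι
  have hπι : ∀ x ∈ S, π (ι x) = x := by
    intro x hx
    simp only [hι, dif_pos hx, hπ]
    rw [FreeGroup.lift_apply_of, Equiv.symm_apply_apply]
  -- the lift of `A` to the free group
  set Alift : Matrix (Fin k) (Fin k) (MonoidAlgebra ℤ F) :=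
    A.map (fun v => MonoidAlgebra.ofCoeff (Finsupp.mapDomain ι v.coeff)) with hAlift
  have hsupp : ∀ i j, (A i j).coeff.support ⊆ S := by
    intro i j
    exact Finset.le_sup (f := fun p : Fin k × Fin k => (A p.1 p.2).coeff.support)
      (Finset.mem_univ (i, j))
  have hπAlift : ∀ i j, MonoidAlgebra.mapDomainRingHom ℤ π (Alift i j) = A i j := by
    intro i j
    show MonoidAlgebra.ofCoeff (Finsupp.mapDomain π (Finsupp.mapDomain ι (A i j).coeff)) = A i j
    rw [← Finsupp.mapDomain_comp]
    have : Finsupp.mapDomain (π ∘ ι) (A i j).coeff = Finsupp.mapDomain id (A i j).coeff :=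
      Finsupp.mapDomain_congr fun x hx => hπι x (hsupp i j hx)
    rw [this, Finsupp.mapDomain_id]
  have hmapAlift : Alift.map (MonoidAlgebra.mapDomainRingHom ℤ π) = A :=
    Matrix.ext fun i j => hπAlift i j
  -- the error matrix and its support
  set C : Matrix (Fin k) (Fin k) (MonoidAlgebra ℤ F) := Alift * Alift - Alift with hC
  have hπC : ∀ i j, MonoidAlgebra.mapDomainRingHom ℤ π (C i j) = 0 := by
    intro i j
    have : C.map (MonoidAlgebra.mapDomainRingHom ℤ π) = A * A - A := by
      rw [hC, Matrix.map_sub _ (fun a b => map_sub _ a b), Matrix.map_mul, hmapAlift]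
    have h0 : C.map (MonoidAlgebra.mapDomainRingHom ℤ π) = 0 := by
      rw [this, hA, sub_self]
    have := congrFun (congrFun h0 i) j
    simpa using this
  set T : Finset F := Finset.univ.sup (fun p : Fin k × Fin k => (C p.1 p.2).coeff.support) with hT
  -- the relations
  set Rfin : Finset F :=
    ((T ×ˢ T).filter (fun p => π p.1 = π p.2)).image (fun p => p.1⁻¹ * p.2) with hR
  set R : Set F := ↑Rfin with hRset
  set N : Subgroup F := Subgroup.normalClosure R with hN
  have hRker : R ⊆ (π.ker : Set F) := by
    intro w hw
    simp only [hRset, hR, Finset.coe_image, Set.mem_image, Finset.mem_coe,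
      Finset.mem_filter] at hw
    obtain ⟨p, ⟨_, hp⟩, rfl⟩ := hw
    show π (p.1⁻¹ * p.2) = 1
    rw [map_mul, map_inv, hp, inv_mul_cancel]
  have hNker : N ≤ π.ker := Subgroup.normalClosure_le_normal hRker
  set H : Type := F ⧸ N with hH
  refine ⟨H, inferInstance, ⟨n, R, Rfin.finite_toSet, ⟨MulEquiv.refl _⟩⟩, ?_⟩
  set φ : H →* G := QuotientGroup.lift N π (fun x hx => hNker hx) with hφ
  set mk : F →* H := QuotientGroup.mk' N with hmk
  set B : Matrix (Fin k) (Fin k) (MonoidAlgebra ℤ H) :=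
    Alift.map (MonoidAlgebra.mapDomainRingHom ℤ mk) with hB
  have hφmk : ∀ w : F, φ (mk w) = π w := fun w => rfl
  refine ⟨φ, B, ?_, ?_⟩
  · -- idempotency
    have key : ∀ i j, MonoidAlgebra.mapDomainRingHom ℤ mk (C i j) = 0 := by
      intro i j
      apply MonoidAlgebra.coeff_injective
      refine mapDomain_eq_zero_of_factors (C i j).coeff π mk ?_ (congrArg MonoidAlgebra.coeff (hπC i j))
      intro x hx y hy hxy
      have hxT : x ∈ T := Finset.le_sup (f := fun p : Fin k × Fin k => (C p.1 p.2).coeff.support)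
        (Finset.mem_univ (i, j)) hx
      have hyT : y ∈ T := Finset.le_sup (f := fun p : Fin k × Fin k => (C p.1 p.2).coeff.support)
        (Finset.mem_univ (i, j)) hy
      have hmem : x⁻¹ * y ∈ N := by
        apply Subgroup.subset_normalClosure
        simp only [hRset, hR, Finset.coe_image, Set.mem_image, Finset.mem_coe,
          Finset.mem_filter]
        exact ⟨(x, y), ⟨Finset.mem_product.2 ⟨hxT, hyT⟩, hxy⟩, rfl⟩
      exact (QuotientGroup.eq ).2 hmem
    have h0 : B * B - B = 0 := by
      have : B * B - B = C.map (MonoidAlgebra.mapDomainRingHom ℤ mk) := by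
        rw [hC, Matrix.map_sub _ (fun a b => map_sub _ a b), Matrix.map_mul, hB]
      rw [this]
      exact Matrix.ext fun i j => key i j
    have := sub_eq_zero.mp h0
    exact this
  · -- image is `A`
    have : B.map (MonoidAlgebra.mapDomainRingHom ℤ φ) =
        Alift.map (MonoidAlgebra.mapDomainRingHom ℤ π) := by
      refine Matrix.ext fun i j => ?_
      show MonoidAlgebra.ofCoeff (Finsupp.mapDomain φ (Finsupp.mapDomain mk (Alift i j).coeff)) = MonoidAlgebra.ofCoeff (Finsupp.mapDomain π (Alift i j).coeff)
      rw [← Finsupp.mapDomain_comp]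
      exact congrArg _ (Finsupp.mapDomain_congr fun x _ => hφmk x)
    rw [this, hmapAlift]
end

section
/- Let ι : H → G be an injective group homomorphism that admits a group homomorphism retraction ρ : G → H with ρ ∘ ι = id_H. If G satisfies the classical Bass conjecture, then H satisfies the classical Bass conjecture. -/
open scoped Classical

/-- If `H` is a retract of `G` (via an injective homomorphism `ι : H → G` admitting a
retraction `ρ : G → H`) and `G` satisfies the classical Bass conjecture, then so does `H`. -/
theorem satisfiesBassConjecture_of_retract
    {H G : Type*} [Group H] [Group G] (ι : H →* G) (hι : Function.Injective ι)
    (ρ : G →* H) (hρ : ρ.comp ι = MonoidHom.id H)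
    (hG : SatisfiesBassConjecture G) : SatisfiesBassConjecture H := by
  intro k hk A hA s hs
  have hρι : ∀ a : H, ρ (ι a) = a := fun a => DFunLike.congr_fun hρ a
  set f : MonoidAlgebra ℤ H →+* MonoidAlgebra ℤ G := MonoidAlgebra.mapDomainRingHom ℤ ι with hf
  have hB : (A.map f) * (A.map f) = A.map f := by
    rw [← Matrix.map_mul, hA]
  have hs' : ι s ≠ 1 := fun h => hs (hι (by simp [h]))
  have h1 := hG k hk (A.map f) hB (ι s) hs'
  have htr : (A.map f).trace = f A.trace := by
    simp [Matrix.trace, Matrix.diag, Matrix.map_apply, map_sum]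
  rw [htr] at h1
  have hconj : ∀ h : H, IsConj (ι s) (ι h) ↔ IsConj s h := by
    intro h
    constructor
    · rintro ⟨c, hc⟩
      refine ⟨Units.map ρ c, ?_⟩
      have hc' : (c : G) * ι s = ι h * c := hc
      have := congrArg ρ hc'
      simpa [SemiconjBy, map_mul, hρι] using this
    · exact fun hc => ι.map_isConj hc
  have key : partialAug (f A.trace) (ι s) = partialAug A.trace s := by
    unfold partialAug
    have hsupp : (f A.trace).coeff.support = A.trace.coeff.support.map ⟨ι, hι⟩ := by
      rw [Finset.map_eq_image]
      exact Finsupp.mapDomain_support_of_injective hι A.trace.coeff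
    rw [hsupp, Finset.filter_map, Finset.sum_map]
    refine Finset.sum_congr ?_ ?_
    · apply Finset.filter_congr
      intro h _
      simp only [Function.comp]
      exact hconj h
    · intro h _
      exact Finsupp.mapDomain_apply hι A.trace.coeff h
  rw [key] at h1
  exact h1
end
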